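/- Let p be a prime, let c ∈ ℕ with c ≥ 2 and gcd(c,p) = 1, let N ∈ ℕ with N ≥ 1, and let j ∈ ℕ₀. Then in ℂ: Σ_{ξ ∈ μ_c, ξ ≠ 1} ξ^{pj}/(1 − ξ^{p^N}) = Σ_{ξ ∈ μ_c, ξ ≠ 1} ξ^{j}/(1 − ξ^{p^{N−1}}). (All denominators are nonzero since gcd(c,p) = 1.) -/

import Mathlib

/-- Compatibility of the Mazur measure:
`μ̃_c(pj + p^N ℤ_p) = μ̃_c(j + p^{N−1} ℤ_p)`, i.e.
`Σ_{ξ ∈ μ_c, ξ≠1} ξ^{pj}/(1 − ξ^{p^N}) = Σ_{ξ ∈ μ_c, ξ≠1} ξ^{j}/(1 − ξ^{p^{N−1}})` in `ℂ`. -/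
theorem mazur_measure_compatibility (p : ℕ) (hp : p.Prime) (c : ℕ) (hc : 2 ≤ c)
    (hcp : Nat.Coprime c p) (N : ℕ) (hN : 1 ≤ N) (j : ℕ) :
    ∑ ξ ∈ (Polynomial.nthRootsFinset c (1 : ℂ)).erase 1, ξ ^ (p * j) / (1 - ξ ^ (p ^ N))
      = ∑ ξ ∈ (Polynomial.nthRootsFinset c (1 : ℂ)).erase 1, ξ ^ j / (1 - ξ ^ (p ^ (N - 1))) := by
  have hc0 : c ≠ 0 := by omega
  obtain ⟨d, -, hd⟩ := Nat.exists_mul_mod_eq_one_of_coprime hcp.symm (by omega)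
  -- key: for a c-th root of unity ξ, ξ ^ (p * d) = ξ
  have key : ∀ ξ ∈ Polynomial.nthRootsFinset c (1 : ℂ), (ξ : ℂ) ^ (p * d) = ξ := by
    intro ξ hξ
    have hξc : ξ ^ c = 1 := (Polynomial.mem_nthRootsFinset (by omega) 1).1 hξ
    have : p * d = c * (p * d / c) + 1 := by
      conv_lhs => rw [← Nat.div_add_mod (p * d) c, hd]
    rw [this, pow_add, pow_mul, hξc, one_pow, one_mul, pow_one]
  refine Finset.sum_nbij' (fun ξ => ξ ^ p) (fun ξ => ξ ^ d) ?_ ?_ ?_ ?_ ?_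
  · intro ξ hξ
    obtain ⟨hξ1, hξm⟩ := Finset.mem_erase.1 hξ
    have hξc : ξ ^ c = 1 := (Polynomial.mem_nthRootsFinset (by omega) 1).1 hξm
    refine Finset.mem_erase.2 ⟨fun h => hξ1 ?_, (Polynomial.mem_nthRootsFinset (by omega) 1).2 ?_⟩
    · beta_reduce at h
      have := key ξ hξm
      rw [pow_mul, h, one_pow] at this
      exact this.symm
    · rw [← pow_mul, mul_comm, pow_mul, hξc, one_pow]
  · intro ξ hξ
    obtain ⟨hξ1, hξm⟩ := Finset.mem_erase.1 hξ
    have hξc : ξ ^ c = 1 := (Polynomial.mem_nthRootsFinset (by omega) 1).1 hξm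
    refine Finset.mem_erase.2 ⟨fun h => hξ1 ?_, (Polynomial.mem_nthRootsFinset (by omega) 1).2 ?_⟩
    · beta_reduce at h
      have := key ξ hξm
      rw [mul_comm p d, pow_mul, h, one_pow] at this
      exact this.symm
    · rw [← pow_mul, mul_comm, pow_mul, hξc, one_pow]
  · intro ξ hξ
    simp only [← pow_mul]
    exact key ξ (Finset.mem_of_mem_erase hξ)
  · intro ξ hξ
    simp only [← pow_mul, mul_comm d p]
    exact key ξ (Finset.mem_of_mem_erase hξ)
  · intro ξ hξ
    simp only [← pow_mul, ← pow_succ']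
    rw [Nat.sub_add_cancel hN]
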